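/- Let α, β, γ ∈ (0, π) with α + β + γ = π. Then for all (s, t, r) ∈ ℝ³ the quadratic form Q(s,t,r) = cot α·(t−r)² + cot β·(r−s)² + cot γ·(s−t)² satisfies Q(s,t,r) ≥ 0, and Q(s,t,r) = 0 if and only if s = t = r. In other words, Q is positive semidefinite with one-dimensional kernel spanned by (1,1,1). -/
import Mathlib


open Real

/-- For angles `α, β, γ ∈ (0,π)` with `α + β + γ = π`, the quadratic form
`Q(s,t,r) = cot α·(t−r)² + cot β·(r−s)² + cot γ·(s−t)²` is positive
semidefinite, and it vanishes exactly on the constants `s = t = r`. -/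
theorem cot_form_posSemidef (α β γ : ℝ)
    (hα : α ∈ Set.Ioo 0 π) (hβ : β ∈ Set.Ioo 0 π) (hγ : γ ∈ Set.Ioo 0 π)
    (hsum : α + β + γ = π) :
    ∀ s t r : ℝ,
      0 ≤ Real.cot α * (t - r)^2 + Real.cot β * (r - s)^2 + Real.cot γ * (s - t)^2 ∧
      (Real.cot α * (t - r)^2 + Real.cot β * (r - s)^2 + Real.cot γ * (s - t)^2 = 0 ↔
        s = t ∧ t = r) := by
  intro s t r
  have hsa : 0 < Real.sin α := Real.sin_pos_of_pos_of_lt_pi hα.1 hα.2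
  have hsb : 0 < Real.sin β := Real.sin_pos_of_pos_of_lt_pi hβ.1 hβ.2
  have hsc : 0 < Real.sin γ := Real.sin_pos_of_pos_of_lt_pi hγ.1 hγ.2
  have hγeq : γ = π - (α + β) := by linarith
  have hsinγ : Real.sin γ = Real.sin α * Real.cos β + Real.cos α * Real.sin β := by
    rw [hγeq, Real.sin_pi_sub, Real.sin_add]
  have hcosγ : Real.cos γ = Real.sin α * Real.sin β - Real.cos α * Real.cos β := by
    rw [hγeq, Real.cos_pi_sub, Real.cos_add]; ring
  set Q := Real.cot α * (t - r)^2 + Real.cot β * (r - s)^2 + Real.cot γ * (s - t)^2 with hQdef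
  have key : Real.sin γ * Real.sin α * Real.sin β * Q =
      (Real.cos α * Real.sin β * (t - r) - Real.cos β * Real.sin α * (r - s))^2 +
      (Real.sin α * Real.sin β * (t - s))^2 := by
    rw [hQdef, Real.cot_eq_cos_div_sin, Real.cot_eq_cos_div_sin, Real.cot_eq_cos_div_sin]
    have hne : Real.sin α * Real.cos β + Real.cos α * Real.sin β ≠ 0 := by
      rw [← hsinγ]; exact hsc.ne'
    rw [hsinγ, hcosγ]
    field_simp [hsa.ne', hsb.ne', hne]
    ring
  have hpos : 0 < Real.sin γ * Real.sin α * Real.sin β := by positivity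
  have hR : 0 ≤ Real.sin γ * Real.sin α * Real.sin β * Q := by rw [key]; positivity
  constructor
  · have h0 : Real.sin γ * Real.sin α * Real.sin β * 0 ≤
        Real.sin γ * Real.sin α * Real.sin β * Q := by rw [mul_zero]; exact hR
    exact le_of_mul_le_mul_left h0 hpos
  · constructor
    · intro hQ0
      rw [hQ0, mul_zero] at key
      set A := Real.cos α * Real.sin β * (t - r) - Real.cos β * Real.sin α * (r - s) with hA
      set B := Real.sin α * Real.sin β * (t - s) with hB
      have hA2 : A ^ 2 = 0 := by nlinarith [sq_nonneg A, sq_nonneg B]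
      have hB2 : B ^ 2 = 0 := by nlinarith [sq_nonneg A, sq_nonneg B]
      have hA0 : A = 0 := by exact pow_eq_zero_iff two_ne_zero |>.mp hA2
      have hB0 : B = 0 := by exact pow_eq_zero_iff two_ne_zero |>.mp hB2
      have hts : t - s = 0 := by
        rcases mul_eq_zero.mp hB0 with h | h
        · exact absurd h (by positivity)
        · exact h
      have hst : s = t := by linarith
      subst hst
      have hfac : (Real.cos α * Real.sin β + Real.cos β * Real.sin α) * (s - r) = 0 := by
        rw [hA] at hA0; linarith [hA0]
      have hfpos : 0 < Real.cos α * Real.sin β + Real.cos β * Real.sin α := by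
        rw [hsinγ] at hsc; linarith
      have : s - r = 0 := by
        rcases mul_eq_zero.mp hfac with h | h
        · linarith
        · exact h
      exact ⟨rfl, by linarith⟩
    · rintro ⟨h1, h2⟩
      rw [hQdef, h1, h2]
      ring
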